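/- Let s, ŝ ∈ [0,1]^{D×K} be two score matrices such that |s_{d,a} − ŝ_{d,a}| ≤ η for all users d ∈ [D] and arms a ∈ [K], for some η ≥ 0. Let π* be a maximizer of NSW(·, s) over Δ^K and let π̂ be a maximizer of NSW(·, ŝ) over Δ^K. Then NSW(π*, s) − NSW(π̂, s) ≤ 2·D·η. -/
import Mathlib


open Finset

/-- The Nash social welfare of a policy `π` under score matrix `s`. -/
def NSW {D K : ℕ} (π : Fin K → ℝ) (s : Fin D → Fin K → ℝ) : ℝ :=
  ∏ d, ∑ a, π a * s d a

/-- A policy is a probability vector over the `K` arms. -/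
def IsPolicy {K : ℕ} (π : Fin K → ℝ) : Prop :=
  (∀ a, 0 ≤ π a) ∧ ∑ a, π a = 1

lemma prod_diff_le {ι : Type*} [DecidableEq ι] (t : Finset ι) (η : ℝ) (hη : 0 ≤ η) (a b : ι → ℝ)
    (ha : ∀ i ∈ t, a i ∈ Set.Icc (0:ℝ) 1) (hb : ∀ i ∈ t, b i ∈ Set.Icc (0:ℝ) 1)
    (hc : ∀ i ∈ t, a i - b i ≤ η) :
    (∏ i ∈ t, a i) - (∏ i ∈ t, b i) ≤ t.card * η := by
  induction t using Finset.induction with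
  | empty => simp
  | @insert j t hi ih =>
    
    have haj := ha j (mem_insert_self _ _)
    have hbj := hb j (mem_insert_self _ _)
    have ha' : ∀ i ∈ t, a i ∈ Set.Icc (0:ℝ) 1 := fun i h => ha i (mem_insert_of_mem h)
    have hb' : ∀ i ∈ t, b i ∈ Set.Icc (0:ℝ) 1 := fun i h => hb i (mem_insert_of_mem h)
    have hc' : ∀ i ∈ t, a i - b i ≤ η := fun i h => hc i (mem_insert_of_mem h)
    have ih' := ih ha' hb' hc'
    rw [prod_insert hi, prod_insert hi, card_insert_of_notMem hi]
    have hpa0 : (0:ℝ) ≤ ∏ i ∈ t, a i := prod_nonneg fun i h => (ha' i h).1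
    have hpb0 : (0:ℝ) ≤ ∏ i ∈ t, b i := prod_nonneg fun i h => (hb' i h).1
    have hpb1 : (∏ i ∈ t, b i) ≤ 1 := prod_le_one (fun i h => (hb' i h).1) (fun i h => (hb' i h).2)
    have key : a j * ∏ i ∈ t, a i - b j * ∏ i ∈ t, b i
        = a j * ((∏ i ∈ t, a i) - ∏ i ∈ t, b i) + (a j - b j) * ∏ i ∈ t, b i := by ring
    rw [key]
    have h1 : a j * ((∏ i ∈ t, a i) - ∏ i ∈ t, b i) ≤ t.card * η := by
      calc a j * ((∏ i ∈ t, a i) - ∏ i ∈ t, b i) ≤ 1 * (t.card * η) := by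
            rcases le_or_gt ((∏ i ∈ t, a i) - ∏ i ∈ t, b i) 0 with h | h
            · calc a j * ((∏ i ∈ t, a i) - ∏ i ∈ t, b i) ≤ 0 :=
                    mul_nonpos_of_nonneg_of_nonpos haj.1 h
                _ ≤ 1 * (t.card * η) := by positivity
            · exact mul_le_mul haj.2 ih' h.le one_pos.le
        _ = t.card * η := one_mul _
    have h2 : (a j - b j) * ∏ i ∈ t, b i ≤ η := by
      rcases le_or_gt (a j - b j) 0 with h | h
      · calc (a j - b j) * ∏ i ∈ t, b i ≤ 0 := mul_nonpos_of_nonpos_of_nonneg h hpb0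
          _ ≤ η := hη
      · calc (a j - b j) * ∏ i ∈ t, b i ≤ η * 1 :=
            mul_le_mul (hc j (mem_insert_self _ _)) hpb1 hpb0 hη
          _ = η := mul_one _
    push_cast
    linarith

lemma nsw_close {D K : ℕ} (η : ℝ) (hη : 0 ≤ η) (s shat : Fin D → Fin K → ℝ)
    (hs : ∀ d a, s d a ∈ Set.Icc (0 : ℝ) 1)
    (hshat : ∀ d a, shat d a ∈ Set.Icc (0 : ℝ) 1)
    (hclose : ∀ d a, |s d a - shat d a| ≤ η)
    (π : Fin K → ℝ) (hπ : IsPolicy π) :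
    NSW π s - NSW π shat ≤ D * η := by
  obtain ⟨hπ0, hπ1⟩ := hπ
  have hu : ∀ (t : Fin D → Fin K → ℝ), (∀ d a, t d a ∈ Set.Icc (0:ℝ) 1) →
      ∀ d, (∑ a, π a * t d a) ∈ Set.Icc (0:ℝ) 1 := by
    intro t ht d
    constructor
    · exact Finset.sum_nonneg fun a _ => mul_nonneg (hπ0 a) (ht d a).1
    · calc ∑ a, π a * t d a ≤ ∑ a, π a * 1 :=
            Finset.sum_le_sum fun a _ => mul_le_mul_of_nonneg_left (ht d a).2 (hπ0 a)
        _ = 1 := by simpa using hπ1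
  have hd : ∀ d, (∑ a, π a * s d a) - (∑ a, π a * shat d a) ≤ η := by
    intro d
    rw [← Finset.sum_sub_distrib]
    calc ∑ a, (π a * s d a - π a * shat d a) = ∑ a, π a * (s d a - shat d a) := by
          simp [mul_sub]
      _ ≤ ∑ a, π a * η := Finset.sum_le_sum fun a _ =>
          mul_le_mul_of_nonneg_left (le_trans (le_abs_self _) (hclose d a)) (hπ0 a)
      _ = η := by rw [← Finset.sum_mul, hπ1, one_mul]
  have := prod_diff_le (Finset.univ : Finset (Fin D)) η hη
    (fun d => ∑ a, π a * s d a) (fun d => ∑ a, π a * shat d a)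
    (fun d _ => hu s hs d) (fun d _ => hu shat hshat d) (fun d _ => hd d)
  simpa [NSW] using this

/-- If the two score matrices `s, ŝ ∈ [0,1]^{D×K}` are entrywise within `η ≥ 0`
of each other, `π*` maximizes `NSW(·, s)` over the simplex and `π̂` maximizes `NSW(·, ŝ)`
over the simplex, then `NSW(π*, s) − NSW(π̂, s) ≤ 2·D·η`. -/
theorem nsw_empirical_maximizer_bound (D K : ℕ) (η : ℝ) (hη : 0 ≤ η)
    (s shat : Fin D → Fin K → ℝ)
    (hs : ∀ d a, s d a ∈ Set.Icc (0 : ℝ) 1)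
    (hshat : ∀ d a, shat d a ∈ Set.Icc (0 : ℝ) 1)
    (hclose : ∀ d a, |s d a - shat d a| ≤ η)
    (πstar πhat : Fin K → ℝ)
    (hπstar : IsPolicy πstar) (hπhat : IsPolicy πhat)
    (hopt : ∀ π : Fin K → ℝ, IsPolicy π → NSW π s ≤ NSW πstar s)
    (hopt' : ∀ π : Fin K → ℝ, IsPolicy π → NSW π shat ≤ NSW πhat shat) :
    NSW πstar s - NSW πhat s ≤ 2 * D * η := by
  have hclose' : ∀ d a, |shat d a - s d a| ≤ η := by
    intro d a; rw [abs_sub_comm]; exact hclose d a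
  have h1 := nsw_close η hη s shat hs hshat hclose πstar hπstar
  have h2 := nsw_close η hη shat s hshat hs hclose' πhat hπhat
  have h3 := hopt' πstar hπstar
  linarith
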